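/- arXiv:1610.09666 — 3 statements merged into one kernel-verified Lean document; each statement's English description precedes it below -/
import Mathlib

section
/- For every integer j ≥ 1, Σ_{m=1}^{j} C(j, m) · (−1)^{j−m} / m⁴ = (−1)^{j−1} · (H_j⁴ + 6·H_j²·H_j^{(2)} + 3·(H_j^{(2)})² + 8·H_j·H_j^{(3)} + 6·H_j^{(4)}) / 24; equivalently, S(4, j) = (−1)^{j−1} · (H_j⁴ + 6·H_j²·H_j^{(2)} + 3·(H_j^{(2)})² + 8·H_j·H_j^{(3)} + 6·H_j^{(4)}) / (24 · j!). -/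
/-- The generalized transformation coefficient
`S k j = (1/j!) · Σ_{m=1}^{j} C(j,m) · (−1)^{j−m} · m^{−k}`. -/
noncomputable def S (k j : ℕ) : ℝ :=
  (1 / (Nat.factorial j : ℝ)) *
    ∑ m ∈ Finset.Icc 1 j, (Nat.choose j m : ℝ) * (-1 : ℝ) ^ (j - m) / (m : ℝ) ^ k

/-- The `r`-order harmonic number `H r n = Σ_{m=1}^{n} 1/m^r`. -/
noncomputable def H (r n : ℕ) : ℝ :=
  ∑ m ∈ Finset.Icc 1 n, 1 / (m : ℝ) ^ r

/-- Auxiliary: the alternating binomial sum with sign `(-1)^(m-1)`. -/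
noncomputable def B (k j : ℕ) : ℝ :=
  ∑ m ∈ Finset.Icc 1 j, (Nat.choose j m : ℝ) * (-1 : ℝ) ^ (m - 1) / (m : ℝ) ^ k

lemma B_zero (j : ℕ) (hj : 1 ≤ j) : B 0 j = 1 := by
  have hins : Finset.range (j+1) = insert 0 (Finset.Icc 1 j) := by
    ext m; simp; omega
  have key : ∑ m ∈ Finset.range (j+1), (-1 : ℝ)^m * (Nat.choose j m : ℝ) = 0 := by
    have h1 := Int.alternating_sum_range_choose (n := j)
    rw [if_neg (by omega : j ≠ 0)] at h1
    have h2 : ((∑ i ∈ Finset.range (j + 1), (-1:ℤ) ^ i * (j.choose i : ℤ) : ℤ) : ℝ)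
        = ∑ m ∈ Finset.range (j+1), (-1 : ℝ)^m * (Nat.choose j m : ℝ) := by
      push_cast; ring
    rw [h1] at h2
    rw [← h2]; norm_num
  rw [hins, Finset.sum_insert (by simp)] at key
  simp only [pow_zero, one_mul, Nat.choose_zero_right, Nat.cast_one] at key
  have hterm : ∀ m ∈ Finset.Icc 1 j, (Nat.choose j m : ℝ) * (-1 : ℝ) ^ (m - 1) / (m : ℝ) ^ 0
      = -((-1 : ℝ)^m * (Nat.choose j m : ℝ)) := by
    intro m hm
    simp only [Finset.mem_Icc] at hm
    have hme : m = (m - 1) + 1 := by omega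
    have hp : (-1:ℝ)^m = (-1:ℝ)^(m-1) * (-1) := by
      conv_lhs => rw [hme]
      rw [pow_succ]
    rw [hp]
    ring
  unfold B
  rw [Finset.sum_congr rfl hterm, Finset.sum_neg_distrib]
  linarith

lemma H_succ (r j : ℕ) : H r (j+1) = H r j + 1 / ((j : ℝ) + 1) ^ r := by
  unfold H
  rw [Finset.sum_Icc_succ_top (by omega)]
  push_cast; ring

lemma aux_alg (k : ℕ) (s c1 c2 c3 x y : ℝ) (hx : x ≠ 0) (hy : y ≠ 0)
    (h1 : c3 = c1 + c2) (h2 : y * c2 = x * c3) :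
    c3 * s / x ^ (k+1) = c1 * s / x ^ (k+1) + c3 * s / x ^ k / y := by
  have hxk : x ^ k ≠ 0 := pow_ne_zero _ hx
  have hc1 : c1 = c3 - x * c3 / y := by
    field_simp
    linear_combination (-y) * h1 - h2
  rw [hc1, pow_succ]
  field_simp
  ring

lemma B_succ (k j : ℕ) : B (k+1) (j+1) = B (k+1) j + B k (j+1) / ((j : ℝ) + 1) := by
  have hj1 : ((j : ℝ) + 1) ≠ 0 := by positivity
  have h0 : B (k+1) j = ∑ m ∈ Finset.Icc 1 (j+1),
      (Nat.choose j m : ℝ) * (-1 : ℝ) ^ (m - 1) / (m : ℝ) ^ (k+1) := by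
    rw [Finset.sum_Icc_succ_top (by omega)]
    simp [B, Nat.choose_succ_self]
  rw [h0]
  unfold B
  rw [Finset.sum_div, ← Finset.sum_add_distrib]
  apply Finset.sum_congr rfl
  intro m hm
  simp only [Finset.mem_Icc] at hm
  have hm1 : 1 ≤ m := hm.1
  have hmR : (m : ℝ) ≠ 0 := by positivity
  have hm' : (m - 1) + 1 = m := by omega
  have hpas : (Nat.choose (j+1) m : ℝ) = (Nat.choose j m : ℝ) + (Nat.choose j (m-1) : ℝ) := by
    conv_lhs => rw [← hm']
    rw [Nat.choose_succ_succ]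
    push_cast [Nat.succ_eq_add_one, hm']; ring
  have h2n : (j+1) * j.choose (m-1) = (j+1).choose m * m := by
    have h := Nat.add_one_mul_choose_eq j (m-1)
    simpa [Nat.succ_eq_add_one, hm'] using h
  have hmul : ((j : ℝ) + 1) * (Nat.choose j (m-1) : ℝ)
      = (m : ℝ) * (Nat.choose (j+1) m : ℝ) := by
    have hc := congrArg (Nat.cast (R := ℝ)) h2n
    push_cast at hc
    linarith
  exact aux_alg k ((-1:ℝ)^(m-1)) _ _ _ _ _ hmR hj1 hpas hmul

lemma B_closed (j : ℕ) :
    B 1 j = H 1 j ∧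
    B 2 j = ((H 1 j)^2 + H 2 j) / 2 ∧
    B 3 j = ((H 1 j)^3 + 3*(H 1 j)*(H 2 j) + 2*(H 3 j)) / 6 ∧
    B 4 j = ((H 1 j)^4 + 6*(H 1 j)^2*(H 2 j) + 3*(H 2 j)^2
        + 8*(H 1 j)*(H 3 j) + 6*(H 4 j)) / 24 := by
  induction j with
  | zero => simp [B, H]
  | succ n ih =>
    obtain ⟨h1, h2, h3, h4⟩ := ih
    have hx : ((n : ℝ) + 1) ≠ 0 := by positivity
    have hB0 : B 0 (n+1) = 1 := B_zero _ (by omega)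
    have r1 : B 1 (n+1) = B 1 n + B 0 (n+1) / ((n:ℝ)+1) := B_succ 0 n
    have r2 : B 2 (n+1) = B 2 n + B 1 (n+1) / ((n:ℝ)+1) := B_succ 1 n
    have r3 : B 3 (n+1) = B 3 n + B 2 (n+1) / ((n:ℝ)+1) := B_succ 2 n
    have r4 : B 4 (n+1) = B 4 n + B 3 (n+1) / ((n:ℝ)+1) := B_succ 3 n
    have s1 := H_succ 1 n
    have s2 := H_succ 2 n
    have s3 := H_succ 3 n
    have s4 := H_succ 4 n
    have e1 : B 1 (n+1) = H 1 (n+1) := by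
      rw [r1, hB0, h1, s1, pow_one]
    have e2 : B 2 (n+1) = ((H 1 (n+1))^2 + H 2 (n+1)) / 2 := by
      rw [r2, e1, h2, s1, s2]
      field_simp
      ring
    have e3 : B 3 (n+1) = ((H 1 (n+1))^3 + 3*(H 1 (n+1))*(H 2 (n+1)) + 2*(H 3 (n+1))) / 6 := by
      rw [r3, e2, h3, s1, s2, s3]
      field_simp
      ring
    have e4 : B 4 (n+1) = ((H 1 (n+1))^4 + 6*(H 1 (n+1))^2*(H 2 (n+1)) + 3*(H 2 (n+1))^2
        + 8*(H 1 (n+1))*(H 3 (n+1)) + 6*(H 4 (n+1))) / 24 := by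
      rw [r4, e3, h4, s1, s2, s3, s4]
      field_simp
      ring
    exact ⟨e1, e2, e3, e4⟩

theorem stmt_5 (j : ℕ) (hj : 1 ≤ j) :
    (∑ m ∈ Finset.Icc 1 j, (Nat.choose j m : ℝ) * (-1 : ℝ) ^ (j - m) / (m : ℝ) ^ 4)
      = (-1 : ℝ) ^ (j - 1) * ((H 1 j) ^ 4 + 6 * (H 1 j) ^ 2 * H 2 j
        + 3 * (H 2 j) ^ 2 + 8 * H 1 j * H 3 j + 6 * H 4 j) / 24 ∧
    S 4 j = (-1 : ℝ) ^ (j - 1) * ((H 1 j) ^ 4 + 6 * (H 1 j) ^ 2 * H 2 j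
        + 3 * (H 2 j) ^ 2 + 8 * H 1 j * H 3 j + 6 * H 4 j)
      / (24 * (Nat.factorial j : ℝ)) := by
  have hB4 := (B_closed j).2.2.2
  have hsum : (∑ m ∈ Finset.Icc 1 j, (Nat.choose j m : ℝ) * (-1 : ℝ) ^ (j - m) / (m : ℝ) ^ 4)
      = (-1 : ℝ) ^ (j - 1) * B 4 j := by
    unfold B
    rw [Finset.mul_sum]
    apply Finset.sum_congr rfl
    intro m hm
    simp only [Finset.mem_Icc] at hm
    have hsgn : (-1 : ℝ) ^ (j - m) = (-1 : ℝ) ^ (j - 1) * (-1 : ℝ) ^ (m - 1) := by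
      rw [← pow_add]
      have he : (j - 1) + (m - 1) = (j - m) + 2 * (m - 1) := by omega
      rw [he, pow_add, pow_mul]
      norm_num
    rw [hsgn]
    ring
  have hfirst : (∑ m ∈ Finset.Icc 1 j, (Nat.choose j m : ℝ) * (-1 : ℝ) ^ (j - m) / (m : ℝ) ^ 4)
      = (-1 : ℝ) ^ (j - 1) * ((H 1 j) ^ 4 + 6 * (H 1 j) ^ 2 * H 2 j
        + 3 * (H 2 j) ^ 2 + 8 * H 1 j * H 3 j + 6 * H 4 j) / 24 := by
    rw [hsum, hB4]
    ring
  refine ⟨hfirst, ?_⟩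
  have hfac : (Nat.factorial j : ℝ) ≠ 0 := by
    exact_mod_cast Nat.factorial_ne_zero j
  unfold S
  rw [hfirst]
  field_simp
end

section
/- For all integers k ≥ 0 and j ≥ 1, the exponential harmonic numbers are recovered from the generalized transformation coefficients by H_j^{(k+1)} / j! = Σ_{i=1}^{j} S(k, i) / (i · (j−i)!). -/
open Finset

lemma lemA (n : ℕ) : ∀ m : ℕ, 1 ≤ m →
    ∑ t ∈ range (n+1), (-1:ℝ)^t * (n.choose t : ℝ) / ((t:ℝ)+m) =
      (Nat.factorial (m-1) : ℝ) * (Nat.factorial n : ℝ) / (Nat.factorial (n+m) : ℝ) := by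
  induction n with
  | zero =>
    intro m hm
    have h1 : (m : ℝ) ≠ 0 := by positivity
    have hfac : (Nat.factorial m : ℝ) = m * Nat.factorial (m-1) := by
      rw [← Nat.mul_factorial_pred (Nat.one_le_iff_ne_zero.mp hm)]
      push_cast; ring
    have h3 : (Nat.factorial (m-1) : ℝ) ≠ 0 := by positivity
    simp only [Finset.sum_range_one, Nat.choose_self, Nat.cast_one, Nat.cast_zero, pow_zero,
      Nat.zero_add, hfac]
    field_simp
    simp
  | succ n ih =>
    intro m hm
    have ihm := ih m hm
    have ihm1 := ih (m+1) (by omega)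
    push_cast at ihm1
    have key : ∑ t ∈ range (n+2), (-1:ℝ)^t * ((n+1).choose t : ℝ) / ((t:ℝ)+m) =
        (∑ t ∈ range (n+1), (-1:ℝ)^t * (n.choose t : ℝ) / ((t:ℝ)+m))
        - (∑ t ∈ range (n+1), (-1:ℝ)^t * (n.choose t : ℝ) / ((t:ℝ)+((m:ℝ)+1))) := by
      rw [Finset.sum_range_succ' (fun t => (-1:ℝ)^t * ((n+1).choose t : ℝ) / ((t:ℝ)+m)) (n+1)]
      push_cast
      have split : ∀ t ∈ range (n+1),
          (-1:ℝ)^(t+1) * ((n+1).choose (t+1) : ℝ) / ((t:ℝ)+1+m) =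
          (-1:ℝ)^(t+1) * ((n.choose (t+1) : ℝ)) / ((t:ℝ)+1+m)
          - (-1:ℝ)^t * (n.choose t : ℝ) / ((t:ℝ)+((m:ℝ)+1)) := by
        intro t ht
        rw [Nat.choose_succ_succ]
        have h : (t:ℝ)+1+m ≠ 0 := by positivity
        push_cast
        field_simp
        ring
      rw [Finset.sum_congr rfl split, Finset.sum_sub_distrib]
      have peel : ∑ t ∈ range (n+1), (-1:ℝ)^(t+1) * ((n.choose (t+1)) : ℝ) / ((t:ℝ)+1+m)
          + 1 / (m:ℝ)
          = ∑ t ∈ range (n+1), (-1:ℝ)^t * (n.choose t : ℝ) / ((t:ℝ)+m) := by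
        rw [Finset.sum_range_succ' (fun t => (-1:ℝ)^t * (n.choose t : ℝ) / ((t:ℝ)+m)) n]
        rw [Finset.sum_range_succ]
        push_cast
        simp [Nat.choose_succ_self]
      rw [← peel]
      simp only [Nat.choose_zero_right, Nat.cast_one]
      ring
    rw [key, ihm, ihm1]
    have hfm : (Nat.factorial m : ℝ) = m * Nat.factorial (m-1) := by
      rw [← Nat.mul_factorial_pred (Nat.one_le_iff_ne_zero.mp hm)]; push_cast; ring
    have h1 : (Nat.factorial (n+1+m) : ℝ) = ((n:ℝ)+1+m) * Nat.factorial (n+m) := by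
      have e : n+1+m = (n+m)+1 := by omega
      rw [e, Nat.factorial_succ]; push_cast; ring
    have h2 : (Nat.factorial (n+(m+1)) : ℝ) = ((n:ℝ)+1+m) * Nat.factorial (n+m) := by
      have e : n+(m+1) = (n+m)+1 := by omega
      rw [e, Nat.factorial_succ]; push_cast; ring
    have h3 : (Nat.factorial (n+1) : ℝ) = ((n:ℝ)+1) * Nat.factorial n := by
      rw [Nat.factorial_succ]; push_cast; ring
    rw [h1, h2, h3, hfm]
    have e1 : (Nat.factorial (n+m) : ℝ) ≠ 0 := by positivity
    have e2 : ((n:ℝ)+1+m) ≠ 0 := by positivity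
    field_simp
    ring

lemma lemL (m j : ℕ) (hm : 1 ≤ m) (hmj : m ≤ j) :
    ∑ i ∈ Icc m j, (-1:ℝ)^(i-m) * (i.choose m : ℝ) * (j.choose i : ℝ) / (i:ℝ) = 1 / m := by
  have hre : ∑ i ∈ Icc m j, (-1:ℝ)^(i-m) * (i.choose m : ℝ) * (j.choose i : ℝ) / (i:ℝ)
      = ∑ t ∈ range (j - m + 1),
        (-1:ℝ)^t * ((m+t).choose m : ℝ) * (j.choose (m+t) : ℝ) / ((m:ℝ)+t) := by
    rw [← Finset.Ico_add_one_right_eq_Icc, Finset.sum_Ico_eq_sum_range]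
    have e : j + 1 - m = j - m + 1 := by omega
    rw [e]
    refine Finset.sum_congr rfl ?_
    intro t ht
    have : m + t - m = t := by omega
    rw [this]
    push_cast
    ring
  rw [hre]
  have hterm : ∀ t ∈ range (j - m + 1),
      (-1:ℝ)^t * ((m+t).choose m : ℝ) * (j.choose (m+t) : ℝ) / ((m:ℝ)+t)
      = (j.choose m : ℝ) * ((-1:ℝ)^t * ((j-m).choose t : ℝ) / ((t:ℝ)+m)) := by
    intro t ht
    simp only [Finset.mem_range] at ht
    have h1 : m + t ≤ j := by omega
    have h2 : m ≤ m + t := by omega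
    have := Nat.choose_mul (n := j) h2
    have e : m + t - m = t := by omega
    rw [e] at this
    have cast : ((m+t).choose m : ℝ) * (j.choose (m+t) : ℝ) = (j.choose m : ℝ) * ((j-m).choose t : ℝ) := by
      rw [mul_comm]
      exact_mod_cast congrArg (Nat.cast : ℕ → ℝ) this
    have hrw : (-1:ℝ)^t * ((m+t).choose m : ℝ) * (j.choose (m+t) : ℝ) / ((m:ℝ)+t)
        = (((m+t).choose m : ℝ) * (j.choose (m+t) : ℝ)) * ((-1:ℝ)^t/((m:ℝ)+t)) := by ring
    rw [hrw, cast]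
    ring
  rw [Finset.sum_congr rfl hterm, ← Finset.mul_sum, lemA (j-m) m hm]
  have e : j - m + m = j := by omega
  rw [e]
  have hfac := Nat.choose_mul_factorial_mul_factorial hmj
  have hfm : (Nat.factorial m : ℝ) = m * Nat.factorial (m-1) := by
    rw [← Nat.mul_factorial_pred (Nat.one_le_iff_ne_zero.mp hm)]; push_cast; ring
  have hj : (Nat.factorial j : ℝ) = (j.choose m : ℝ) * Nat.factorial m * Nat.factorial (j-m) := by
    exact_mod_cast (congrArg (Nat.cast : ℕ → ℝ) hfac).symm
  have n1 : (Nat.factorial (m-1) : ℝ) ≠ 0 := by positivity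
  have n2 : (Nat.factorial (j-m) : ℝ) ≠ 0 := by positivity
  have n3 : (m:ℝ) ≠ 0 := by positivity
  have n4 : (j.choose m : ℝ) ≠ 0 := by
    have := Nat.choose_pos hmj; positivity
  rw [hj, hfm]
  field_simp

theorem stmt_10 (k j : ℕ) (hj : 1 ≤ j) :
    H (k + 1) j / (Nat.factorial j : ℝ) =
      ∑ i ∈ Finset.Icc 1 j, S k i / ((i : ℝ) * (Nat.factorial (j - i) : ℝ)) := by
  classical
  set f : ℕ → ℕ → ℝ := fun i m =>
    (Nat.choose i m : ℝ) * (-1:ℝ)^(i-m) /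
      ((m:ℝ)^k * ((Nat.factorial i : ℝ) * (i:ℝ) * (Nat.factorial (j-i) : ℝ))) with hf
  have step1 : ∑ i ∈ Icc 1 j, S k i / ((i : ℝ) * (Nat.factorial (j - i) : ℝ))
      = ∑ i ∈ Icc 1 j, ∑ m ∈ Icc 1 i, f i m := by
    refine Finset.sum_congr rfl ?_
    intro i hi
    rw [S, mul_comm, Finset.sum_mul, Finset.sum_div]
    refine Finset.sum_congr rfl ?_
    intro m hm
    simp only [hf, one_div]
    ring
  have step2 : ∀ i ∈ Icc 1 j, ∑ m ∈ Icc 1 i, f i m = ∑ m ∈ Icc 1 j, f i m := by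
    intro i hi
    simp only [Finset.mem_Icc] at hi
    refine Finset.sum_subset (Finset.Icc_subset_Icc_right hi.2) ?_
    intro m hmj hmi
    simp only [Finset.mem_Icc, not_and, not_le] at hmj hmi
    have : i < m := hmi hmj.1
    simp [hf, Nat.choose_eq_zero_of_lt this]
  have step4 : ∀ m ∈ Icc 1 j, ∑ i ∈ Icc 1 j, f i m = ∑ i ∈ Icc m j, f i m := by
    intro m hm
    simp only [Finset.mem_Icc] at hm
    refine (Finset.sum_subset (Finset.Icc_subset_Icc_left hm.1) ?_).symm
    intro i hij him
    simp only [Finset.mem_Icc, not_and, not_le] at hij him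
    have : i < m := by
      by_contra h
      push_neg at h
      have := him h
      omega
    simp [hf, Nat.choose_eq_zero_of_lt this]
  have step5 : ∀ m ∈ Icc 1 j, ∑ i ∈ Icc m j, f i m = 1 / ((m:ℝ)^(k+1) * Nat.factorial j) := by
    intro m hm
    simp only [Finset.mem_Icc] at hm
    have hterm : ∀ i ∈ Icc m j, f i m
        = (1/((m:ℝ)^k * (Nat.factorial j : ℝ))) *
          ((-1:ℝ)^(i-m) * (i.choose m : ℝ) * (j.choose i : ℝ) / (i:ℝ)) := by
      intro i hi
      simp only [Finset.mem_Icc] at hi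
      have hij : i ≤ j := hi.2
      have hfc : (Nat.factorial j : ℝ)
          = (j.choose i : ℝ) * (Nat.factorial i : ℝ) * (Nat.factorial (j - i) : ℝ) := by
        exact_mod_cast (congrArg (Nat.cast : ℕ → ℝ) (Nat.choose_mul_factorial_mul_factorial hij)).symm
      have hi1 : (1:ℕ) ≤ i := le_trans hm.1 hi.1
      have n0 : (i:ℝ) ≠ 0 := by positivity
      have n1 : (Nat.factorial i : ℝ) ≠ 0 := by positivity
      have n2 : (Nat.factorial (j-i) : ℝ) ≠ 0 := by positivity
      have n3 : (j.choose i : ℝ) ≠ 0 := by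
        have := Nat.choose_pos hij; positivity
      have n4 : (m:ℝ)^k ≠ 0 := by
        have : (0:ℝ) < m := by exact_mod_cast hm.1
        positivity
      simp only [hf]
      rw [hfc]
      field_simp
    rw [Finset.sum_congr rfl hterm, ← Finset.mul_sum, lemL m j hm.1 hm.2]
    have n4 : (m:ℝ) ≠ 0 := by
      have : (0:ℝ) < m := by exact_mod_cast hm.1
      positivity
    have n5 : (Nat.factorial j : ℝ) ≠ 0 := by positivity
    field_simp
    ring
  rw [step1, Finset.sum_congr rfl step2, Finset.sum_comm,
    Finset.sum_congr rfl step4, Finset.sum_congr rfl step5, H, Finset.sum_div]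
  refine Finset.sum_congr rfl ?_
  intro m hm
  simp only [Finset.mem_Icc] at hm
  have n4 : (m:ℝ) ≠ 0 := by
    have : (0:ℝ) < m := by exact_mod_cast hm.1
    positivity
  have n5 : (Nat.factorial j : ℝ) ≠ 0 := by positivity
  field_simp
end

section
/- The alternating zeta value ζ*(2) = Σ_{n=1}^{∞} (−1)^{n−1}/n² = π²/12 has the convergent series representation Σ_{j=1}^{∞} (H_j² + H_j^{(2)}) / 2^{j+2} = π²/12. -/
open Real

lemma H1_succ (n : ℕ) : H 1 (n + 1) = H 1 n + 1 / (n + 1) := by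
  unfold H
  rw [Finset.sum_Icc_succ_top (by omega)]
  push_cast
  ring

lemma H2_succ (n : ℕ) : H 2 (n + 1) = H 2 n + 1 / ((n : ℝ) + 1) ^ 2 := by
  unfold H
  rw [Finset.sum_Icc_succ_top (by omega)]
  push_cast
  ring

lemma alt_row (n : ℕ) :
    ∑ j ∈ Finset.range (n + 1), (-1 : ℝ) ^ j * ((n+1).choose (j+1)) = 1 := by
  have h := Int.alternating_sum_range_choose (n := n + 1)
  rw [if_neg (by omega)] at h
  have h2 : ((∑ i ∈ Finset.range (n + 2), (-1 : ℤ) ^ i * ((n+1).choose i) : ℤ) : ℝ) = 0 := by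
    rw [h]; norm_num
  push_cast at h2
  rw [Finset.sum_range_succ'] at h2
  simp only [Nat.choose_zero_right, Nat.cast_one, pow_zero, one_mul] at h2
  have key : ∑ x ∈ Finset.range (n + 1), (-1 : ℝ) ^ (x + 1) * ((n+1).choose (x+1))
      = - ∑ j ∈ Finset.range (n + 1), (-1 : ℝ) ^ j * ((n+1).choose (j+1)) := by
    rw [← Finset.sum_neg_distrib]
    apply Finset.sum_congr rfl
    intros; ring
  rw [key] at h2
  linarith

lemma choose_cast (n j : ℕ) :
    ((n : ℝ) + 1) * (n.choose j) = ((n+1).choose (j+1)) * ((j : ℝ) + 1) := by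
  have h := congrArg (Nat.cast (R := ℝ)) (Nat.add_one_mul_choose_eq n j)
  push_cast at h
  linarith

lemma lemE (n : ℕ) :
    ∑ j ∈ Finset.range (n + 1), (-1 : ℝ) ^ j * (n.choose j) / (j + 1) = 1 / (n + 1) := by
  have key : ∀ j : ℕ, (-1 : ℝ) ^ j * (n.choose j) / (j + 1)
      = (-1 : ℝ) ^ j * ((n+1).choose (j+1)) / (n + 1) := by
    intro j
    have hj : ((j : ℝ) + 1) ≠ 0 := by positivity
    have hn : ((n : ℝ) + 1) ≠ 0 := by positivity
    have h3 : (n.choose j : ℝ) / (j+1) = ((n+1).choose (j+1) : ℝ) / (n+1) := by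
      rw [div_eq_div_iff hj hn]
      linarith [choose_cast n j]
    rw [mul_div_assoc, h3, mul_div_assoc]
  rw [Finset.sum_congr rfl fun j _ => key j, ← Finset.sum_div, alt_row n]

lemma lemB (n : ℕ) :
    ∑ j ∈ Finset.range n, (-1 : ℝ) ^ j * (n.choose (j+1)) / (j + 1) = H 1 n := by
  induction n with
  | zero => simp [H]
  | succ n ih =>
    rw [H1_succ, ← ih]
    have split : ∀ j ∈ Finset.range (n+1), (-1 : ℝ) ^ j * ((n+1).choose (j+1)) / (j + 1)
        = (-1 : ℝ) ^ j * (n.choose (j+1)) / (j + 1)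
          + (-1 : ℝ) ^ j * (n.choose j) / (j + 1) := by
      intro j _
      rw [Nat.choose_succ_succ]
      push_cast
      ring
    rw [Finset.sum_congr rfl split, Finset.sum_add_distrib, lemE]
    congr 1
    rw [Finset.sum_range_succ]
    simp [Nat.choose_succ_self]

lemma lemA_s18 (k : ℕ) :
    ∑ i ∈ Finset.range (k+1), (-1 : ℝ) ^ i * (k.choose i) / ((i : ℝ) + 1) ^ 2
      = H 1 (k+1) / ((k : ℝ) + 1) := by
  have key : ∀ i : ℕ, (-1 : ℝ) ^ i * (k.choose i) / ((i : ℝ) + 1) ^ 2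
      = ((-1 : ℝ) ^ i * ((k+1).choose (i+1)) / ((i : ℝ) + 1)) / ((k : ℝ) + 1) := by
    intro i
    have hi : ((i : ℝ) + 1) ≠ 0 := by positivity
    have hk : ((k : ℝ) + 1) ≠ 0 := by positivity
    have h3 : (k.choose i : ℝ) / ((i : ℝ) + 1) ^ 2
        = ((k+1).choose (i+1) : ℝ) / (((i : ℝ) + 1) * ((k : ℝ) + 1)) := by
      rw [div_eq_div_iff (by positivity) (by positivity)]
      linear_combination ((i : ℝ) + 1) * choose_cast k i
    rw [mul_div_assoc, h3, div_div, mul_div_assoc]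
  rw [Finset.sum_congr rfl fun i _ => key i, ← Finset.sum_div, lemB (k+1)]

lemma lemD (n : ℕ) :
    ∑ k ∈ Finset.range n, H 1 (k+1) / ((k : ℝ) + 1) = ((H 1 n) ^ 2 + H 2 n) / 2 := by
  induction n with
  | zero => simp [H]
  | succ n ih =>
    rw [Finset.sum_range_succ, ih, H1_succ, H2_succ]
    have h : ((n : ℝ) + 1) ≠ 0 := by positivity
    field_simp
    ring


lemma H1_nonneg (n : ℕ) : 0 ≤ H 1 n := by
  apply Finset.sum_nonneg
  intro m _
  positivity


lemma sumC (i : ℕ) : Summable (fun t : ℕ => ((t+i).choose i : ℝ) * (1/2)^(t+i+1)) := by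
  apply summable_of_ratio_norm_eventually_le (r := 3/4) (by norm_num)
  filter_upwards [Filter.eventually_ge_atTop (2*i)] with t ht
  simp only [show t+1+i = t+i+1 from by omega]
  have key : 2 * ((t+i+1).choose i) ≤ 3 * ((t+i).choose i) := by
    have h := Nat.choose_mul_succ_eq (t+i) i
    rw [show t + i + 1 - i = t + 1 from by omega] at h
    have h5 : (t+i).choose i * (2*(t+i+1)) ≤ (t+i).choose i * (3*(t+1)) :=
      Nat.mul_le_mul_left _ (by omega)
    have h3 : 2 * ((t+i+1).choose i) * (t+1) ≤ 3 * ((t+i).choose i) * (t+1) := by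
      nlinarith [h, h5]
    exact Nat.le_of_mul_le_mul_right h3 (by omega)
  have hnn : ∀ s : ℕ, (0:ℝ) ≤ ((s+i).choose i : ℝ) * (1/2)^(s+i+1) := fun s => by positivity
  rw [Real.norm_eq_abs, Real.norm_eq_abs, abs_of_nonneg (by positivity : (0:ℝ) ≤ ((t+i+1).choose i : ℝ) * (1/2)^(t+i+1+1)), abs_of_nonneg (by positivity : (0:ℝ) ≤ ((t+i).choose i : ℝ) * (1/2)^(t+i+1))]
  have keyR : (2:ℝ) * ((t+i+1).choose i) ≤ 3 * ((t+i).choose i) := by exact_mod_cast key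
  rw [show t+i+1+1 = (t+i+1)+1 from rfl, pow_succ]
  have hp : (0:ℝ) < (1/2:ℝ)^(t+i+1) := by positivity
  nlinarith [keyR, hp]

lemma hasSumC (i : ℕ) : HasSum (fun t : ℕ => ((t+i).choose i : ℝ) * (1/2)^(t+i+1)) 1 := by
  induction i with
  | zero =>
    have h := hasSum_geometric_two.mul_left ((1:ℝ)/2)
    rw [show (1:ℝ)/2 * 2 = 1 from by norm_num] at h
    convert h using 1
    · rfl
    ext t
    simp [pow_succ]
    ring
  | succ i ih =>
    have hsum : Summable (fun t : ℕ => ((t+(i+1)).choose (i+1) : ℝ) * (1/2)^(t+(i+1)+1)) :=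
      sumC (i+1)
    have split : ∀ t : ℕ, ((t+(i+1)).choose (i+1) : ℝ) * (1/2)^(t+(i+1)+1)
        = ((t+i).choose i : ℝ) * (1/2)^(t+i+2)
          + ((t+i).choose (i+1) : ℝ) * (1/2)^(t+i+2) := by
      intro t
      have hp : (t+(i+1)).choose (i+1) = (t+i).choose i + (t+i).choose (i+1) := by
        rw [show t+(i+1) = (t+i)+1 from by ring, Nat.choose_succ_succ]
      rw [hp, show t+(i+1)+1 = t+i+2 from by ring]
      push_cast
      ring
    have h1 : HasSum (fun t : ℕ => ((t+i).choose i : ℝ) * (1/2)^(t+i+2)) (1/2) := by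
      have h := ih.mul_left ((1:ℝ)/2)
      rw [mul_one] at h
      convert h using 1
      · rfl
      ext t
      rw [show t+i+2 = (t+i+1)+1 from rfl, pow_succ]
      ring
    have hg : Summable (fun t : ℕ => ((t+i).choose (i+1) : ℝ) * (1/2)^(t+i+2)) := by
      apply Summable.of_nonneg_of_le (fun t => by positivity) _ hsum
      intro t
      rw [show t+(i+1)+1 = t+i+2 from by ring]
      have hle : ((t+i).choose (i+1) : ℝ) ≤ ((t+(i+1)).choose (i+1) : ℝ) := by
        exact_mod_cast Nat.choose_le_choose _ (by omega)
      have hp : (0:ℝ) ≤ (1/2:ℝ)^(t+i+2) := by positivity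
      nlinarith
    have hgval : ∑' t : ℕ, ((t+i).choose (i+1) : ℝ) * (1/2)^(t+i+2)
        = 1/2 * ∑' t : ℕ, ((t+(i+1)).choose (i+1) : ℝ) * (1/2)^(t+(i+1)+1) := by
      rw [Summable.tsum_eq_zero_add hg]
      rw [show ((0+i).choose (i+1) : ℝ) * (1/2)^(0+i+2) = 0 from by
        simp [Nat.choose_eq_zero_of_lt (Nat.lt_succ_self i)]]
      rw [zero_add, ← tsum_mul_left]
      apply tsum_congr
      intro t
      rw [show t+1+i = t+(i+1) from by ring, show t+(i+1)+2 = (t+(i+1)+1)+1 from rfl,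
        pow_succ]
      ring
    have hSval : ∑' t : ℕ, ((t+(i+1)).choose (i+1) : ℝ) * (1/2)^(t+(i+1)+1)
        = 1/2 + 1/2 * ∑' t : ℕ, ((t+(i+1)).choose (i+1) : ℝ) * (1/2)^(t+(i+1)+1) := by
      calc ∑' t : ℕ, ((t+(i+1)).choose (i+1) : ℝ) * (1/2)^(t+(i+1)+1)
          = ∑' t : ℕ, (((t+i).choose i : ℝ) * (1/2)^(t+i+2)
            + ((t+i).choose (i+1) : ℝ) * (1/2)^(t+i+2)) := tsum_congr split
        _ = _ := by rw [Summable.tsum_add h1.summable hg, h1.tsum_eq, hgval]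
    have hfin : ∑' t : ℕ, ((t+(i+1)).choose (i+1) : ℝ) * (1/2)^(t+(i+1)+1) = 1 := by
      linarith
    have hfinal := hsum.hasSum
    rwa [hfin] at hfinal



lemma basel_succ : HasSum (fun n : ℕ => 1 / ((n : ℝ) + 1) ^ 2) (π ^ 2 / 6) := by
  have h := hasSum_zeta_two
  rw [← hasSum_nat_add_iff' 1] at h
  simpa using h

lemma part1 : HasSum (fun n : ℕ => (-1 : ℝ) ^ n / ((n : ℝ) + 1) ^ 2) (π ^ 2 / 12) := by
  have hf := basel_succ
  -- odd part
  have hodd : HasSum (fun n : ℕ => if Odd n then 2 * (1 / ((n : ℝ) + 1) ^ 2) else 0)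
      (π ^ 2 / 12) := by
    have hg : Function.Injective (fun k : ℕ => 2 * k + 1) := by
      intro a b hab; dsimp at hab; omega
    rw [← hg.hasSum_iff]
    · have : HasSum (fun k : ℕ => (1/2 : ℝ) * (1 / ((k : ℝ) + 1) ^ 2)) (π ^ 2 / 12) := by
        have h2 := hf.mul_left (1/2 : ℝ)
        rw [show (1/2 : ℝ) * (π ^ 2 / 6) = π ^ 2 / 12 from by ring] at h2
        exact h2
      convert this using 2 with k
      simp only [Function.comp_apply]
      rw [if_pos ⟨k, by omega⟩]
      push_cast
      have h2 : ((2*k+1 : ℝ) + 1) ^ 2 = 4 * ((k:ℝ)+1)^2 := by ring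
      rw [h2]
      have : ((k:ℝ)+1)^2 ≠ 0 := by positivity
      field_simp
      ring
    · intro n hn
      rw [if_neg]
      rintro ⟨m, hm⟩
      refine hn ⟨m, ?_⟩
      dsimp
      omega
  have hsub := hf.sub hodd
  have : HasSum (fun n : ℕ => 1 / ((n : ℝ) + 1) ^ 2
      - (if Odd n then 2 * (1 / ((n : ℝ) + 1) ^ 2) else 0)) (π ^ 2 / 12) := by
    convert hsub using 1
    · rfl
    ring
  convert this using 2 with n
  rcases Nat.even_or_odd n with he | ho
  · rw [if_neg (by simpa using he), he.neg_one_pow]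
    ring
  · rw [if_pos ho, ho.neg_one_pow]
    ring

noncomputable def G : ℕ × ℕ → ℝ :=
  fun p => (-1 : ℝ) ^ p.1 / ((p.1 : ℝ) + 1) ^ 2
    * (((p.2 + p.1).choose p.1 : ℝ) * (1/2) ^ (p.2 + p.1 + 1))

lemma absG (p : ℕ × ℕ) : |G p| = 1 / ((p.1 : ℝ) + 1) ^ 2
    * (((p.2 + p.1).choose p.1 : ℝ) * (1/2) ^ (p.2 + p.1 + 1)) := by
  simp only [G]
  rw [abs_mul, abs_div, abs_pow, abs_neg, abs_one, one_pow]
  rw [abs_of_nonneg (by positivity : (0:ℝ) ≤ ((p.1:ℝ)+1)^2),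
    abs_of_nonneg (by positivity : (0:ℝ) ≤ ((p.2 + p.1).choose p.1 : ℝ) * (1/2) ^ (p.2+p.1+1))]

set_option maxHeartbeats 1000000 in
lemma summableG : Summable G := by
  have hF : Summable (fun p : ℕ × ℕ => 1 / ((p.1 : ℝ) + 1) ^ 2
      * (((p.2 + p.1).choose p.1 : ℝ) * (1/2) ^ (p.2 + p.1 + 1))) := by
    rw [summable_prod_of_nonneg (fun p => by positivity)]
    refine ⟨fun i => ((hasSumC i).mul_left (1 / ((i : ℝ) + 1) ^ 2)).summable, ?_⟩
    exact basel_succ.summable.congr fun i => by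
      rw [((hasSumC i).mul_left (1 / ((i : ℝ) + 1) ^ 2)).tsum_eq, mul_one]
  exact summable_abs_iff.mp (hF.congr fun p => (absG p).symm)

lemma hasSumG : HasSum G (π ^ 2 / 12) := by
  have h := summableG.hasSum
  have hfib : HasSum (fun i : ℕ => (-1 : ℝ) ^ i / ((i : ℝ) + 1) ^ 2) (∑' p, G p) := by
    apply h.prod_fiberwise
    intro i
    have := (hasSumC i).mul_left ((-1 : ℝ) ^ i / ((i : ℝ) + 1) ^ 2)
    rwa [mul_one] at this
  rwa [hfib.unique part1] at h

noncomputable def G' : ℕ × ℕ → ℝ :=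
  fun p => if p.2 ≤ p.1 then
    (-1 : ℝ) ^ p.2 * ((p.1.choose p.2 : ℝ)) / ((p.2 : ℝ) + 1) ^ 2 * (1/2) ^ (p.1 + 1)
  else 0

lemma hasSumG' : HasSum G' (π ^ 2 / 12) := by
  have hg : Function.Injective (fun p : ℕ × ℕ => (p.1 + p.2, p.1)) := by
    intro a b hab
    have h1 : a.1 + a.2 = b.1 + b.2 := congrArg Prod.fst hab
    have h2 : a.1 = b.1 := congrArg Prod.snd hab
    have h3 : a.2 = b.2 := by omega
    exact Prod.ext h2 h3
  rw [← hg.hasSum_iff]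
  · have heq : G' ∘ (fun p : ℕ × ℕ => (p.1 + p.2, p.1)) = G := by
      funext p
      simp only [Function.comp_apply, G, G']
      rw [if_pos (Nat.le_add_right p.1 p.2 : ((p.1 + p.2, p.1) : ℕ × ℕ).2 ≤ (p.1 + p.2, p.1).1)]
      rw [Nat.add_comm p.1 p.2]
      ring
    rw [heq]
    exact hasSumG
  · rintro ⟨k, i⟩ hp
    rw [G', if_neg]
    intro hik
    refine hp ⟨(i, k - i), ?_⟩
    dsimp only
    rw [Prod.mk.injEq]
    dsimp only at hik
    constructor <;> omega

lemma step7 : HasSum (fun k : ℕ => (1/2 : ℝ) ^ (k+1) * (H 1 (k+1) / ((k : ℝ) + 1)))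
    (π ^ 2 / 12) := by
  apply hasSumG'.prod_fiberwise
  intro k
  have hfin : HasSum (fun i : ℕ => G' (k, i))
      (∑ i ∈ Finset.range (k+1), G' (k, i)) := by
    apply hasSum_sum_of_ne_finset_zero
    intro i hi
    simp only [Finset.mem_range, not_lt] at hi
    rw [G', if_neg (by dsimp; omega)]
  have hval : ∑ i ∈ Finset.range (k+1), G' (k, i)
      = (1/2 : ℝ) ^ (k+1) * (H 1 (k+1) / ((k : ℝ) + 1)) := by
    rw [← lemA_s18 k, Finset.mul_sum]
    apply Finset.sum_congr rfl
    intro i hi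
    simp only [Finset.mem_range] at hi
    rw [G', if_pos (by dsimp; omega)]
    dsimp only
    ring
  rwa [hval] at hfin

noncomputable def D : ℕ × ℕ → ℝ :=
  fun p => if p.1 ≤ p.2 then (H 1 (p.1+1) / ((p.1 : ℝ) + 1)) * (1/2) ^ (p.2 + 2) else 0

lemma tailGeom (k : ℕ) : HasSum (fun j : ℕ => if k ≤ j then ((1:ℝ)/2) ^ (j + 2) else 0)
    ((1/2 : ℝ) ^ (k+1)) := by
  have hg : Function.Injective (fun t : ℕ => t + k) := fun a b hab => by dsimp at hab; omega
  rw [← hg.hasSum_iff]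
  · have h := hasSum_geometric_two.mul_left ((1/2 : ℝ) ^ (k+2))
    have hval : (1/2 : ℝ) ^ (k+2) * 2 = (1/2) ^ (k+1) := by
      rw [pow_succ]
      ring
    rw [hval] at h
    convert h using 1
    · rfl
    funext t
    simp only [Function.comp_apply]
    rw [if_pos (by omega : k ≤ t + k)]
    rw [show t + k + 2 = (k+2) + t from by ring, pow_add]
  · intro j hj
    rw [if_neg]
    intro hkj
    exact hj ⟨j - k, by dsimp; omega⟩

lemma fibD (k : ℕ) : HasSum (fun j : ℕ => D (k, j))
    ((1/2 : ℝ) ^ (k+1) * (H 1 (k+1) / ((k : ℝ) + 1))) := by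
  have h := (tailGeom k).mul_left (H 1 (k+1) / ((k : ℝ) + 1))
  have heq : (fun j : ℕ => D (k, j))
      = fun j : ℕ => (H 1 (k+1) / ((k : ℝ) + 1)) * (if k ≤ j then ((1:ℝ)/2) ^ (j+2) else 0) := by
    funext j
    simp only [D]
    split_ifs <;> ring
  rw [heq, show ((1:ℝ)/2) ^ (k+1) * (H 1 (k+1) / ((k : ℝ) + 1))
    = (H 1 (k+1) / ((k : ℝ) + 1)) * (1/2 : ℝ) ^ (k+1) from by ring]
  exact h

lemma summableD : Summable D := by
  have hnn : ∀ p : ℕ × ℕ, 0 ≤ D p := by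
    intro p
    simp only [D]
    split_ifs
    · exact mul_nonneg (div_nonneg (H1_nonneg _) (by positivity)) (by positivity)
    · exact le_rfl
  rw [summable_prod_of_nonneg hnn]
  refine ⟨fun k => (fibD k).summable, ?_⟩
  exact step7.summable.congr fun k => by rw [(fibD k).tsum_eq]

lemma hasSumD : HasSum D (π ^ 2 / 12) := by
  have h := summableD.hasSum
  have hfib : HasSum (fun k : ℕ => (1/2 : ℝ) ^ (k+1) * (H 1 (k+1) / ((k : ℝ) + 1)))
      (∑' p, D p) := h.prod_fiberwise fibD
  rwa [hfib.unique step7] at h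

lemma part2 : HasSum (fun j : ℕ => ((H 1 (j + 1)) ^ 2 + H 2 (j + 1)) / 2 ^ (j + 3))
    (π ^ 2 / 12) := by
  have hswap : HasSum (fun p : ℕ × ℕ => D (p.2, p.1)) (π ^ 2 / 12) := by
    rw [show (fun p : ℕ × ℕ => D (p.2, p.1)) = D ∘ (Equiv.prodComm ℕ ℕ) from rfl]
    rw [Equiv.hasSum_iff]
    exact hasSumD
  apply hswap.prod_fiberwise
  intro j
  have hfin : HasSum (fun k : ℕ => D (k, j)) (∑ k ∈ Finset.range (j+1), D (k, j)) := by
    apply hasSum_sum_of_ne_finset_zero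
    intro k hk
    simp only [Finset.mem_range, not_lt] at hk
    rw [D, if_neg (by dsimp; omega)]
  have hval : ∑ k ∈ Finset.range (j+1), D (k, j)
      = ((H 1 (j + 1)) ^ 2 + H 2 (j + 1)) / 2 ^ (j + 3) := by
    have hterm : ∀ k ∈ Finset.range (j+1), D (k, j)
        = (H 1 (k+1) / ((k : ℝ) + 1)) * (1/2) ^ (j + 2) := by
      intro k hk
      simp only [Finset.mem_range] at hk
      rw [D, if_pos (by dsimp; omega)]
    rw [Finset.sum_congr rfl hterm, ← Finset.sum_mul, lemD (j+1)]
    have h1 : ((1:ℝ)/2) ^ (j+2) = 1 / 2 ^ (j+2) := by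
      rw [div_pow, one_pow]
    have h2 : (2:ℝ) ^ (j+3) = 2 ^ (j+2) * 2 := pow_succ 2 (j+2)
    rw [h1, h2]
    rw [div_mul_div_comm, mul_one, mul_comm (2:ℝ) ((2:ℝ) ^ (j+2))]
  rwa [hval] at hfin

theorem stmt_18 :
    HasSum (fun n : ℕ => (-1 : ℝ) ^ n / ((n : ℝ) + 1) ^ 2) (Real.pi ^ 2 / 12) ∧
    HasSum (fun j : ℕ => ((H 1 (j + 1)) ^ 2 + H 2 (j + 1)) / 2 ^ (j + 3))
      (Real.pi ^ 2 / 12) := ⟨part1, part2⟩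
end
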